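/- For each k ∈ {0,…,5}, the eigenspace g_k = {X ∈ sl(3,ℂ) : σ(X) = εᵏ X} is given explicitly by: g₀ = {diag(a, −a, 0) : a ∈ ℂ}; g₁ = all matrices with rows (0, b, 0), (0, 0, a), (a, 0, 0) for a, b ∈ ℂ; g₂ = all matrices with rows (0, 0, a), (0, 0, 0), (0, −a, 0) for a ∈ ℂ; g₃ = {diag(a, a, −2a) : a ∈ ℂ}; g₄ = all matrices with rows (0, 0, 0), (0, 0, a), (−a, 0, 0) for a ∈ ℂ; g₅ = all matrices with rows (0, 0, a), (b, 0, 0), (0, a, 0) for a, b ∈ ℂ. Moreover sl(3,ℂ) is the (internal) direct sum g₀ ⊕ g₁ ⊕ g₂ ⊕ g₃ ⊕ g₄ ⊕ g₅. -/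

import Mathlib

open Complex Matrix

noncomputable section

abbrev M3 := Matrix (Fin 3) (Fin 3) ℂ

/-- ε = exp(iπ/3). -/
def eps : ℂ := Complex.exp (Real.pi * Complex.I / 3)

/-- The matrix P with rows (0, ε², 0), (ε⁴, 0, 0), (0, 0, 1). -/
def Pm : M3 := !![0, eps ^ 2, 0; eps ^ 4, 0, 0; 0, 0, 1]

/-- σ(X) = −P Xᵀ P. -/
def sigmaL (X : M3) : M3 := -(Pm * Xᵀ * Pm)

/-- The eigenspace g_k = {X ∈ sl(3,ℂ) : σ(X) = εᵏ X}. -/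
def gk (k : ℕ) : Set M3 := {X : M3 | X.trace = 0 ∧ sigmaL X = eps ^ k • X}

lemma eps_eq : eps = Real.cos (Real.pi/3) + Real.sin (Real.pi/3) * Complex.I := by
  rw [eps]
  rw [show (Real.pi : ℂ) * Complex.I / 3 = (Real.pi/3 : ℝ) * Complex.I by push_cast; ring]
  rw [Complex.exp_mul_I, Complex.ofReal_cos, Complex.ofReal_sin]

lemma eps_re : eps.re = 1/2 := by simp [eps_eq, Real.cos_pi_div_three]
lemma eps_im : eps.im = Real.sqrt 3 / 2 := by simp [eps_eq, Real.sin_pi_div_three]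

lemma eps_ne (a b : ℝ) (hb : b ≠ 0) : (a:ℂ) + b * eps ≠ 0 := by
  intro h
  have him : ((a:ℂ) + b * eps).im = 0 := by rw [h]; simp
  simp [Complex.add_im, Complex.mul_im, eps_im] at him
  exact hb him

lemma s3 : Real.sqrt 3 ^ 2 = 3 := Real.sq_sqrt (by norm_num)

lemma e2 : eps ^ 2 = eps - 1 := by
  apply Complex.ext <;>
    simp [pow_two, Complex.mul_re, Complex.mul_im, eps_re, eps_im] <;> nlinarith [s3]

lemma e3 : eps ^ 3 = -1 := by linear_combination (eps + 1) * e2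
lemma e4 : eps ^ 4 = -eps := by linear_combination (eps^2 + eps) * e2
lemma e5 : eps ^ 5 = 1 - eps := by linear_combination (eps^3 + eps^2 - 1) * e2

lemma ne0 : eps ≠ 0 := Complex.exp_ne_zero _
lemma ne1 : eps - 1 ≠ 0 := fun h => eps_ne (-1) 1 one_ne_zero (by push_cast; linear_combination h)
lemma ne2 : eps + 1 ≠ 0 := fun h => eps_ne 1 1 one_ne_zero (by push_cast; linear_combination h)
lemma ne3 : eps - 2 ≠ 0 := fun h => eps_ne (-2) 1 one_ne_zero (by push_cast; linear_combination h)
lemma ne4 : 2 * eps - 1 ≠ 0 := fun h => eps_ne (-1) 2 two_ne_zero (by push_cast; linear_combination h)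

lemma cancel {c x : ℂ} (hc : c ≠ 0) (h : c * x = 0) : x = 0 :=
  (mul_eq_zero.mp h).resolve_left hc

lemma sigma_eq (X : M3) : sigmaL X =
    !![-X 1 1, -(eps^4) * X 0 1, -(eps^2) * X 2 1;
       -(eps^2) * X 1 0, -X 0 0, -(eps^4) * X 2 0;
       -(eps^4) * X 1 2, -(eps^2) * X 0 2, -X 2 2] := by
  rw [sigmaL, Pm, Matrix.eta_fin_three X]
  rw [show (!![X 0 0, X 0 1, X 0 2; X 1 0, X 1 1, X 1 2; X 2 0, X 2 1, X 2 2])ᵀ =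
    !![X 0 0, X 1 0, X 2 0; X 0 1, X 1 1, X 2 1; X 0 2, X 1 2, X 2 2] from by
      ext i j; fin_cases i <;> fin_cases j <;> simp]
  rw [Matrix.mul_fin_three, Matrix.mul_fin_three]
  have h6 : eps ^ 6 = 1 := by linear_combination (eps^3 - 1) * e3
  have h8 : eps ^ 8 = eps ^ 2 := by linear_combination (eps^5 - eps^2) * e3
  ext i j; fin_cases i <;> fin_cases j <;> simp <;> ring_nf <;> simp [h6, h8]

lemma mem_gk (k : ℕ) (X : M3) : X ∈ gk k ↔
    X 0 0 + X 1 1 + X 2 2 = 0 ∧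
    -X 1 1 = eps ^ k * X 0 0 ∧
    -(eps ^ 4) * X 0 1 = eps ^ k * X 0 1 ∧
    -(eps ^ 2) * X 2 1 = eps ^ k * X 0 2 ∧
    -(eps ^ 2) * X 1 0 = eps ^ k * X 1 0 ∧
    -X 0 0 = eps ^ k * X 1 1 ∧
    -(eps ^ 4) * X 2 0 = eps ^ k * X 1 2 ∧
    -(eps ^ 4) * X 1 2 = eps ^ k * X 2 0 ∧
    -(eps ^ 2) * X 0 2 = eps ^ k * X 2 1 ∧
    -X 2 2 = eps ^ k * X 2 2 := by
  constructor
  · rintro ⟨ht, hs⟩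
    rw [Matrix.trace_fin_three] at ht
    rw [sigma_eq] at hs
    refine ⟨ht, ?_, ?_, ?_, ?_, ?_, ?_, ?_, ?_, ?_⟩
    · simpa using congrFun (congrFun hs 0) 0
    · simpa using congrFun (congrFun hs 0) 1
    · simpa using congrFun (congrFun hs 0) 2
    · simpa using congrFun (congrFun hs 1) 0
    · simpa using congrFun (congrFun hs 1) 1
    · simpa using congrFun (congrFun hs 1) 2
    · simpa using congrFun (congrFun hs 2) 0
    · simpa using congrFun (congrFun hs 2) 1
    · simpa using congrFun (congrFun hs 2) 2
  · rintro ⟨ht, h1, h2, h3, h4, h5, h6, h7, h8, h9⟩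
    refine ⟨by rw [Matrix.trace_fin_three]; exact ht, ?_⟩
    rw [sigma_eq]
    ext i j
    fin_cases i <;> fin_cases j <;>
      simp only [Matrix.smul_apply, smul_eq_mul] <;> simp <;>
      first
        | linear_combination h1 | linear_combination h2 | linear_combination h3
        | linear_combination h4 | linear_combination h5 | linear_combination h6
        | linear_combination h7 | linear_combination h8 | linear_combination h9

lemma g0_eq : gk 0 = {X : M3 | ∃ a : ℂ, X = !![a, 0, 0; 0, -a, 0; 0, 0, 0]} := by
  ext X
  rw [mem_gk]
  simp only [Set.mem_setOf_eq]
  constructor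
  · rintro ⟨ht, h1, h2, h3, h4, h5, h6, h7, h8, h9⟩
    simp only [pow_zero, one_mul, e5, e4, e3, e2] at h1 h2 h3 h4 h5 h6 h7 h8 h9
    have z22 : X 2 2 = 0 := cancel two_ne_zero (by linear_combination -h9)
    have z01 : X 0 1 = 0 := cancel ne1 (by linear_combination h2)
    have z10 : X 1 0 = 0 := cancel ne0 (by linear_combination -h4)
    have z02 : X 0 2 = 0 := by
      refine cancel (c := 1 - (eps-1)^2)
        (fun h => (mul_ne_zero ne0 ne3) (by linear_combination -h)) ?_
      linear_combination -h3 + (eps-1) * h8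
    have z21 : X 2 1 = 0 := by simpa [z02] using h8.symm
    have z12 : X 1 2 = 0 := by
      refine cancel (c := 1 - eps^2)
        (fun h => (mul_ne_zero ne1 ne2) (by linear_combination -h)) ?_
      linear_combination -h6 - eps * h7
    have z20 : X 2 0 = 0 := by simpa [z12] using h7.symm
    refine ⟨X 0 0, ?_⟩
    ext i j
    fin_cases i <;> fin_cases j <;>
      simp [Matrix.vecHead, Matrix.vecTail, z22, z01, z10, z02, z21, z12, z20] <;>
      linear_combination -h1
  · rintro ⟨a, rfl⟩
    refine ⟨?_, ?_, ?_, ?_, ?_, ?_, ?_, ?_, ?_, ?_⟩ <;>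
      norm_num [Matrix.vecHead, Matrix.vecTail, Matrix.cons_val_two]

lemma g1_eq : gk 1 = {X : M3 | ∃ a b : ℂ, X = !![0, b, 0; 0, 0, a; a, 0, 0]} := by
  ext X
  rw [mem_gk]
  simp only [Set.mem_setOf_eq]
  constructor
  · rintro ⟨ht, h1, h2, h3, h4, h5, h6, h7, h8, h9⟩
    simp only [pow_one, e5, e4, e3, e2] at h1 h2 h3 h4 h5 h6 h7 h8 h9
    have z00 : X 0 0 = 0 := by
      refine cancel (c := 1 - eps^2)
        (fun h => (mul_ne_zero ne1 ne2) (by linear_combination -h)) ?_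
      linear_combination eps * h1 - h5
    have z11 : X 1 1 = 0 := by simpa [z00] using h1
    have z22 : X 2 2 = 0 := cancel ne2 (by linear_combination -h9)
    have z10 : X 1 0 = 0 := cancel ne4 (by linear_combination -h4)
    have z02 : X 0 2 = 0 := by
      refine cancel (c := eps^2 - (eps-1)^2)
        (fun h => ne4 (by linear_combination h)) ?_
      linear_combination -eps * h3 + (eps-1) * h8
    have z21 : X 2 1 = 0 := cancel ne0 (by linear_combination -h8 - (eps-1) * z02)
    have h20 : X 2 0 = X 1 2 := by
      have := cancel ne0 (show eps * (X 2 0 - X 1 2) = 0 by linear_combination h6)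
      linear_combination this
    refine ⟨X 1 2, X 0 1, ?_⟩
    ext i j
    fin_cases i <;> fin_cases j <;>
      simp [Matrix.vecHead, Matrix.vecTail, z00, z11, z22, z10, z02, z21] <;>
      linear_combination h20
  · rintro ⟨a, b, rfl⟩
    refine ⟨?_, ?_, ?_, ?_, ?_, ?_, ?_, ?_, ?_, ?_⟩ <;>
      norm_num [Matrix.vecHead, Matrix.vecTail, Matrix.cons_val_two] <;>
      first
        | linear_combination (-a) * e4
        | linear_combination (-b) * e4

lemma g2_eq : gk 2 = {X : M3 | ∃ a : ℂ, X = !![0, 0, a; 0, 0, 0; 0, -a, 0]} := by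
  ext X
  rw [mem_gk]
  simp only [Set.mem_setOf_eq]
  constructor
  · rintro ⟨ht, h1, h2, h3, h4, h5, h6, h7, h8, h9⟩
    simp only [e5, e4, e3, e2] at h1 h2 h3 h4 h5 h6 h7 h8 h9
    have z00 : X 0 0 = 0 := by
      refine cancel (c := 1 - (eps-1)^2)
        (fun h => (mul_ne_zero ne0 ne3) (by linear_combination -h)) ?_
      linear_combination (eps-1) * h1 - h5
    have z11 : X 1 1 = 0 := by simpa [z00] using h1
    have z22 : X 2 2 = 0 := cancel ne0 (by linear_combination -h9)
    have z01 : X 0 1 = 0 := by linear_combination h2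
    have z10 : X 1 0 = 0 := cancel (mul_ne_zero two_ne_zero ne1) (by linear_combination -h4)
    have z12 : X 1 2 = 0 := by
      refine cancel (c := eps^2 - (eps-1)^2)
        (fun h => ne4 (by linear_combination h)) ?_
      linear_combination eps * h7 + (eps-1) * h6
    have z20 : X 2 0 = 0 := cancel ne1 (by linear_combination -h7 + eps * z12)
    have h21 : X 2 1 = -X 0 2 := by
      have := cancel ne1 (show (eps-1) * (X 2 1 + X 0 2) = 0 by linear_combination -h3)
      linear_combination this
    refine ⟨X 0 2, ?_⟩
    ext i j
    fin_cases i <;> fin_cases j <;>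
      simp [Matrix.vecHead, Matrix.vecTail, z00, z11, z22, z01, z10, z12, z20] <;>
      linear_combination h21
  · rintro ⟨a, rfl⟩
    refine ⟨?_, ?_, ?_, ?_, ?_, ?_, ?_, ?_, ?_, ?_⟩ <;>
      norm_num [Matrix.vecHead, Matrix.vecTail, Matrix.cons_val_two]

lemma g3_eq : gk 3 = {X : M3 | ∃ a : ℂ, X = !![a, 0, 0; 0, a, 0; 0, 0, -2 * a]} := by
  ext X
  rw [mem_gk]
  simp only [Set.mem_setOf_eq]
  constructor
  · rintro ⟨ht, h1, h2, h3, h4, h5, h6, h7, h8, h9⟩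
    simp only [e5, e4, e3, e2] at h1 h2 h3 h4 h5 h6 h7 h8 h9
    have z01 : X 0 1 = 0 := cancel ne2 (by linear_combination h2)
    have z10 : X 1 0 = 0 := cancel ne3 (by linear_combination -h4)
    have z02 : X 0 2 = 0 := by
      refine cancel (c := 1 - (eps-1)^2)
        (fun h => (mul_ne_zero ne0 ne3) (by linear_combination -h)) ?_
      linear_combination h3 + (eps-1) * h8
    have z21 : X 2 1 = 0 := by simpa [z02] using h8.symm
    have z12 : X 1 2 = 0 := by
      refine cancel (c := 1 - eps^2)
        (fun h => (mul_ne_zero ne1 ne2) (by linear_combination -h)) ?_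
      linear_combination h6 - eps * h7
    have z20 : X 2 0 = 0 := by simpa [z12] using h7.symm
    have h11 : X 1 1 = X 0 0 := by linear_combination -h1
    have h22 : X 2 2 = -2 * X 0 0 := by linear_combination ht - h11
    refine ⟨X 0 0, ?_⟩
    ext i j
    fin_cases i <;> fin_cases j <;>
      simp [Matrix.vecHead, Matrix.vecTail, z01, z10, z02, z21, z12, z20] <;>
      first
        | linear_combination h11
        | linear_combination h22
  · rintro ⟨a, rfl⟩
    refine ⟨?_, ?_, ?_, ?_, ?_, ?_, ?_, ?_, ?_, ?_⟩ <;>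
      norm_num [Matrix.vecHead, Matrix.vecTail, Matrix.cons_val_two] <;>
      first
        | ring1
        | linear_combination (-a) * e3
        | linear_combination (2*a) * e3
        | linear_combination a * e3

lemma g4_eq : gk 4 = {X : M3 | ∃ a : ℂ, X = !![0, 0, 0; 0, 0, a; -a, 0, 0]} := by
  ext X
  rw [mem_gk]
  simp only [Set.mem_setOf_eq]
  constructor
  · rintro ⟨ht, h1, h2, h3, h4, h5, h6, h7, h8, h9⟩
    simp only [e5, e4, e3, e2] at h1 h2 h3 h4 h5 h6 h7 h8 h9
    have z00 : X 0 0 = 0 := by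
      refine cancel (c := 1 - eps^2)
        (fun h => (mul_ne_zero ne1 ne2) (by linear_combination -h)) ?_
      linear_combination -eps * h1 - h5
    have z11 : X 1 1 = 0 := by simpa [z00] using h1
    have z22 : X 2 2 = 0 := cancel ne1 (by linear_combination h9)
    have z01 : X 0 1 = 0 := cancel (mul_ne_zero two_ne_zero ne0) (by linear_combination h2)
    have z10 : X 1 0 = 0 := by linear_combination h4
    have z02 : X 0 2 = 0 := by
      refine cancel (c := eps^2 - (eps-1)^2)
        (fun h => ne4 (by linear_combination h)) ?_
      linear_combination eps * h3 + (eps-1) * h8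
    have z21 : X 2 1 = 0 := cancel ne0 (by linear_combination h8 + (eps-1) * z02)
    have h20 : X 2 0 = -X 1 2 := by
      have := cancel ne0 (show eps * (X 2 0 + X 1 2) = 0 by linear_combination h6)
      linear_combination this
    refine ⟨X 1 2, ?_⟩
    ext i j
    fin_cases i <;> fin_cases j <;>
      simp [Matrix.vecHead, Matrix.vecTail, z00, z11, z22, z01, z10, z02, z21] <;>
      linear_combination h20
  · rintro ⟨a, rfl⟩
    refine ⟨?_, ?_, ?_, ?_, ?_, ?_, ?_, ?_, ?_, ?_⟩ <;>
      norm_num [Matrix.vecHead, Matrix.vecTail, Matrix.cons_val_two]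

lemma g5_eq : gk 5 = {X : M3 | ∃ a b : ℂ, X = !![0, 0, a; b, 0, 0; 0, a, 0]} := by
  ext X
  rw [mem_gk]
  simp only [Set.mem_setOf_eq]
  constructor
  · rintro ⟨ht, h1, h2, h3, h4, h5, h6, h7, h8, h9⟩
    simp only [e5, e4, e3, e2] at h1 h2 h3 h4 h5 h6 h7 h8 h9
    have z00 : X 0 0 = 0 := by
      refine cancel (c := 1 - (1-eps)^2)
        (fun h => (mul_ne_zero ne0 ne3) (by linear_combination -h)) ?_
      linear_combination (1-eps) * h1 - h5
    have z11 : X 1 1 = 0 := by simpa [z00] using h1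
    have z22 : X 2 2 = 0 := cancel ne3 (by linear_combination h9)
    have z01 : X 0 1 = 0 := cancel ne4 (by linear_combination h2)
    have z12 : X 1 2 = 0 := by
      refine cancel (c := eps^2 - (1-eps)^2)
        (fun h => ne4 (by linear_combination h)) ?_
      linear_combination eps * h7 + (1-eps) * h6
    have z20 : X 2 0 = 0 := cancel ne1 (by linear_combination h7 - eps * z12)
    have h21 : X 2 1 = X 0 2 := by
      have := cancel ne1 (show (eps-1) * (X 2 1 - X 0 2) = 0 by linear_combination -h3)
      linear_combination this
    refine ⟨X 0 2, X 1 0, ?_⟩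
    ext i j
    fin_cases i <;> fin_cases j <;>
      simp [Matrix.vecHead, Matrix.vecTail, z00, z11, z22, z01, z12, z20] <;>
      linear_combination h21
  · rintro ⟨a, b, rfl⟩
    refine ⟨?_, ?_, ?_, ?_, ?_, ?_, ?_, ?_, ?_, ?_⟩ <;>
      norm_num [Matrix.vecHead, Matrix.vecTail, Matrix.cons_val_two] <;>
      first
        | linear_combination (-a) * e2 + (-a) * e5
        | linear_combination (-b) * e2 + (-b) * e5

set_option maxHeartbeats 1600000 in
lemma decomp (X : M3) (ht : X.trace = 0) :
    ∃! c : Fin 6 → M3, (∀ k : Fin 6, c k ∈ gk (k : ℕ)) ∧ X = ∑ k : Fin 6, c k := by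
  rw [Matrix.trace_fin_three] at ht
  set A0 : M3 := !![(X 0 0 - X 1 1)/2, 0, 0; 0, -((X 0 0 - X 1 1)/2), 0; 0, 0, 0] with hA0
  set A1 : M3 := !![0, X 0 1, 0; 0, 0, (X 1 2 + X 2 0)/2; (X 1 2 + X 2 0)/2, 0, 0] with hA1
  set A2 : M3 := !![0, 0, (X 0 2 - X 2 1)/2; 0, 0, 0; 0, -((X 0 2 - X 2 1)/2), 0] with hA2
  set A3 : M3 := !![(X 0 0 + X 1 1)/2, 0, 0; 0, (X 0 0 + X 1 1)/2, 0;
      0, 0, -2 * ((X 0 0 + X 1 1)/2)] with hA3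
  set A4 : M3 := !![0, 0, 0; 0, 0, (X 1 2 - X 2 0)/2; -((X 1 2 - X 2 0)/2), 0, 0] with hA4
  set A5 : M3 := !![0, 0, (X 0 2 + X 2 1)/2; X 1 0, 0, 0; 0, (X 0 2 + X 2 1)/2, 0] with hA5
  refine ⟨![A0, A1, A2, A3, A4, A5], ⟨?_, ?_⟩, ?_⟩
  · intro k
    fin_cases k
    · show A0 ∈ gk 0
      rw [g0_eq]; exact ⟨_, hA0⟩
    · show A1 ∈ gk 1
      rw [g1_eq]; exact ⟨_, _, hA1⟩
    · show A2 ∈ gk 2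
      rw [g2_eq]; exact ⟨_, hA2⟩
    · show A3 ∈ gk 3
      rw [g3_eq]; exact ⟨_, hA3⟩
    · show A4 ∈ gk 4
      rw [g4_eq]; exact ⟨_, hA4⟩
    · show A5 ∈ gk 5
      rw [g5_eq]; exact ⟨_, _, hA5⟩
  · rw [Fin.sum_univ_six]
    show X = A0 + A1 + A2 + A3 + A4 + A5
    rw [hA0, hA1, hA2, hA3, hA4, hA5]
    ext i j
    fin_cases i <;> fin_cases j <;>
      simp [Matrix.vecHead, Matrix.vecTail] <;>
      first
        | ring1
        | linear_combination -ht
        | linear_combination ht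
  · rintro c ⟨hc, hsum⟩
    have m0 := hc 0; have m1 := hc 1; have m2 := hc 2
    have m3 := hc 3; have m4 := hc 4; have m5 := hc 5
    rw [show ((0 : Fin 6) : ℕ) = 0 from rfl, g0_eq] at m0
    rw [show ((1 : Fin 6) : ℕ) = 1 from rfl, g1_eq] at m1
    rw [show ((2 : Fin 6) : ℕ) = 2 from rfl, g2_eq] at m2
    rw [show ((3 : Fin 6) : ℕ) = 3 from rfl, g3_eq] at m3
    rw [show ((4 : Fin 6) : ℕ) = 4 from rfl, g4_eq] at m4
    rw [show ((5 : Fin 6) : ℕ) = 5 from rfl, g5_eq] at m5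
    obtain ⟨x0, e0⟩ := m0
    obtain ⟨x1, y1, f1⟩ := m1
    obtain ⟨x2, f2⟩ := m2
    obtain ⟨x3, f3⟩ := m3
    obtain ⟨x4, f4⟩ := m4
    obtain ⟨x5, y5, f5⟩ := m5
    rw [Fin.sum_univ_six, e0, f1, f2, f3, f4, f5] at hsum
    have E : ∀ i j : Fin 3, X i j =
        (!![x0, 0, 0; 0, -x0, 0; 0, 0, 0] + !![0, y1, 0; 0, 0, x1; x1, 0, 0] +
          !![0, 0, x2; 0, 0, 0; 0, -x2, 0] + !![x3, 0, 0; 0, x3, 0; 0, 0, -2 * x3] +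
          !![0, 0, 0; 0, 0, x4; -x4, 0, 0] + !![0, 0, x5; y5, 0, 0; 0, x5, 0]) i j :=
      fun i j => congrFun (congrFun hsum i) j
    have E00 := E 0 0; have E01 := E 0 1; have E02 := E 0 2
    have E10 := E 1 0; have E11 := E 1 1; have E12 := E 1 2
    have E20 := E 2 0; have E21 := E 2 1; have E22 := E 2 2
    simp [Matrix.vecHead, Matrix.vecTail] at E00
    simp [Matrix.vecHead, Matrix.vecTail] at E01
    simp [Matrix.vecHead, Matrix.vecTail] at E02
    simp [Matrix.vecHead, Matrix.vecTail] at E10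
    simp [Matrix.vecHead, Matrix.vecTail] at E11
    simp [Matrix.vecHead, Matrix.vecTail] at E12
    simp [Matrix.vecHead, Matrix.vecTail] at E20
    simp [Matrix.vecHead, Matrix.vecTail] at E21
    simp [Matrix.vecHead, Matrix.vecTail] at E22
    have G0 : c 0 = !![(X 0 0 - X 1 1)/2, 0, 0; 0, -((X 0 0 - X 1 1)/2), 0; 0, 0, 0] := by
      rw [e0]; ext i j
      fin_cases i <;> fin_cases j <;> simp [Matrix.vecHead, Matrix.vecTail] <;>
        first
          | linear_combination (E00 - E11)/2
          | linear_combination (E11 - E00)/2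
    have G1 : c 1 = !![0, X 0 1, 0; 0, 0, (X 1 2 + X 2 0)/2; (X 1 2 + X 2 0)/2, 0, 0] := by
      rw [f1]; ext i j
      fin_cases i <;> fin_cases j <;> simp [Matrix.vecHead, Matrix.vecTail] <;>
        first
          | linear_combination -E01
          | linear_combination (E12 + E20)/2
          | linear_combination -(E12 + E20)/2
    have G2 : c 2 = !![0, 0, (X 0 2 - X 2 1)/2; 0, 0, 0; 0, -((X 0 2 - X 2 1)/2), 0] := by
      rw [f2]; ext i j
      fin_cases i <;> fin_cases j <;> simp [Matrix.vecHead, Matrix.vecTail] <;>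
        first
          | linear_combination (E02 - E21)/2
          | linear_combination (E21 - E02)/2
          | linear_combination -(E02 - E21)/2
    have G3 : c 3 = !![(X 0 0 + X 1 1)/2, 0, 0; 0, (X 0 0 + X 1 1)/2, 0;
        0, 0, -2 * ((X 0 0 + X 1 1)/2)] := by
      rw [f3]; ext i j
      fin_cases i <;> fin_cases j <;> simp [Matrix.vecHead, Matrix.vecTail] <;>
        first
          | linear_combination (E00 + E11)/2
          | linear_combination -(E00 + E11)/2
          | linear_combination E22
          | linear_combination -E22
    have G4 : c 4 = !![0, 0, 0; 0, 0, (X 1 2 - X 2 0)/2; -((X 1 2 - X 2 0)/2), 0, 0] := by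
      rw [f4]; ext i j
      fin_cases i <;> fin_cases j <;> simp [Matrix.vecHead, Matrix.vecTail] <;>
        first
          | linear_combination (E12 - E20)/2
          | linear_combination -(E12 - E20)/2
          | linear_combination (E20 - E12)/2
    have G5 : c 5 = !![0, 0, (X 0 2 + X 2 1)/2; X 1 0, 0, 0; 0, (X 0 2 + X 2 1)/2, 0] := by
      rw [f5]; ext i j
      fin_cases i <;> fin_cases j <;> simp [Matrix.vecHead, Matrix.vecTail] <;>
        first
          | linear_combination (E02 + E21)/2
          | linear_combination -(E02 + E21)/2
          | linear_combination -E10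
    funext k
    fin_cases k
    · exact G0.trans hA0.symm
    · exact G1.trans hA1.symm
    · exact G2.trans hA2.symm
    · exact G3.trans hA3.symm
    · exact G4.trans hA4.symm
    · exact G5.trans hA5.symm

theorem statement5 :
    gk 0 = {X : M3 | ∃ a : ℂ, X = !![a, 0, 0; 0, -a, 0; 0, 0, 0]} ∧
    gk 1 = {X : M3 | ∃ a b : ℂ, X = !![0, b, 0; 0, 0, a; a, 0, 0]} ∧
    gk 2 = {X : M3 | ∃ a : ℂ, X = !![0, 0, a; 0, 0, 0; 0, -a, 0]} ∧
    gk 3 = {X : M3 | ∃ a : ℂ, X = !![a, 0, 0; 0, a, 0; 0, 0, -2 * a]} ∧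
    gk 4 = {X : M3 | ∃ a : ℂ, X = !![0, 0, 0; 0, 0, a; -a, 0, 0]} ∧
    gk 5 = {X : M3 | ∃ a b : ℂ, X = !![0, 0, a; b, 0, 0; 0, a, 0]} ∧
    (∀ X : M3, X.trace = 0 →
      ∃! c : Fin 6 → M3, (∀ k : Fin 6, c k ∈ gk (k : ℕ)) ∧ X = ∑ k : Fin 6, c k) := by
  exact ⟨g0_eq, g1_eq, g2_eq, g3_eq, g4_eq, g5_eq, decomp⟩
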